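/- For every convex lattice path p of size (n,d), all but finitely many convex lattice paths of size (n,d) lie below p; that is, the set of convex lattice paths of size (n,d) that do not lie below p is finite. -/

import Mathlib

noncomputable section

namespace ADEShuffle

/-- A convex lattice path of size `(n,d)`: a sequence of lattice points
`P 0 = (0,0), P 1, …, P t = (n,d)` with strictly increasing first coordinates and
strictly increasing slopes of consecutive segments. (The values `P m` for `m > t`
are normalized to equal `P t`, so that a path is uniquely represented.) -/
structure ConvexPath (n : ℕ) (d : ℤ) where
  t : ℕ
  P : ℕ → ℤ × ℤ
  first : P 0 = (0, 0)
  last : P t = ((n : ℤ), d)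
  tail : ∀ m, t ≤ m → P m = P t
  mono : ∀ m, m < t → (P m).1 < (P (m + 1)).1
  convex : ∀ m, m + 2 ≤ t →
    ((P (m + 1)).2 - (P m).2) * ((P (m + 2)).1 - (P (m + 1)).1) <
    ((P (m + 2)).2 - (P (m + 1)).2) * ((P (m + 1)).1 - (P m).1)

/-- The graph of a convex lattice path: the continuous piecewise-linear function
interpolating its vertices. On `[0,n]` it equals the supremum of the affine functions
determined by the segments of the path (since the slopes strictly increase). -/
def ConvexPath.graph {n : ℕ} {d : ℤ} (p : ConvexPath n d) (x : ℝ) : ℝ :=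
  ⨆ m : Fin p.t,
    (((p.P m.1).2 : ℝ) + (x - ((p.P m.1).1 : ℝ)) *
      ((((p.P (m.1 + 1)).2 : ℝ) - ((p.P m.1).2 : ℝ)) /
        (((p.P (m.1 + 1)).1 : ℝ) - ((p.P m.1).1 : ℝ))))

/-- `p` lies below `p'` if its graph is pointwise `≤` that of `p'` on `[0,n]`. -/
def ConvexPath.LiesBelow {n : ℕ} {d : ℤ} (p p' : ConvexPath n d) : Prop :=
  ∀ x ∈ Set.Icc (0 : ℝ) (n : ℝ), p.graph x ≤ p'.graph x

namespace ConvexPath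

variable {n : ℕ} {d : ℤ}

/-- Real x-coordinate of vertex `m`. -/
def X (q : ConvexPath n d) (m : ℕ) : ℝ := ((q.P m).1 : ℝ)

/-- Real y-coordinate of vertex `m`. -/
def Y (q : ConvexPath n d) (m : ℕ) : ℝ := ((q.P m).2 : ℝ)

/-- Slope of segment `m`. -/
def slope (q : ConvexPath n d) (m : ℕ) : ℝ :=
  (q.Y (m + 1) - q.Y m) / (q.X (m + 1) - q.X m)

/-- Affine function extending segment `m`. -/
def line (q : ConvexPath n d) (m : ℕ) (x : ℝ) : ℝ :=
  q.Y m + (x - q.X m) * q.slope m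

lemma graph_eq (q : ConvexPath n d) (x : ℝ) :
    q.graph x = ⨆ m : Fin q.t, q.line m x := rfl

lemma X0 (q : ConvexPath n d) : q.X 0 = 0 := by simp [X, q.first]
lemma Y0 (q : ConvexPath n d) : q.Y 0 = 0 := by simp [Y, q.first]
lemma Xt (q : ConvexPath n d) : q.X q.t = n := by simp [X, q.last]
lemma Yt (q : ConvexPath n d) : q.Y q.t = d := by simp [Y, q.last]

lemma P1_mono (q : ConvexPath n d) {i j : ℕ} (hij : i ≤ j) (hj : j ≤ q.t) :
    (q.P i).1 ≤ (q.P j).1 := by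
  induction j, hij using Nat.le_induction with
  | base => exact le_refl _
  | succ j hij ih => exact (ih (by omega)).trans (q.mono j (by omega)).le

lemma P1_lt (q : ConvexPath n d) {i j : ℕ} (hij : i < j) (hj : j ≤ q.t) :
    (q.P i).1 < (q.P j).1 :=
  lt_of_lt_of_le (q.mono i (by omega)) (q.P1_mono (by omega) hj)

lemma P1_nonneg (q : ConvexPath n d) (m : ℕ) : 0 ≤ (q.P m).1 := by
  rcases le_or_gt m q.t with h | h
  · have := q.P1_mono (Nat.zero_le m) h
    rw [q.first] at this
    exact this
  · rw [q.tail m h.le, q.last]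
    exact Int.ofNat_nonneg n

lemma P1_le (q : ConvexPath n d) (m : ℕ) : (q.P m).1 ≤ n := by
  rcases le_or_gt m q.t with h | h
  · have := q.P1_mono h le_rfl
    rw [q.last] at this
    exact this
  · rw [q.tail m h.le, q.last]

lemma le_P1 (q : ConvexPath n d) : ∀ m, m ≤ q.t → (m : ℤ) ≤ (q.P m).1 := by
  intro m
  induction m with
  | zero => intro _; rw [q.first]; exact le_refl 0
  | succ m ih =>
    intro h
    have h1 := ih (by omega)
    have h2 := q.mono m (by omega)
    push_cast
    omega

lemma t_le (q : ConvexPath n d) : q.t ≤ n := by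
  have h : (q.t : ℤ) ≤ (n : ℤ) := by simpa [q.last] using q.le_P1 q.t le_rfl
  exact_mod_cast h

lemma t_pos (q : ConvexPath n d) (hn : 1 ≤ n) : 0 < q.t := by
  rcases Nat.eq_zero_or_pos q.t with h | h
  · exfalso
    have := q.last
    rw [h, q.first] at this
    have h1 : (0 : ℤ) = (n : ℤ) := congrArg Prod.fst this
    omega
  · exact h

lemma X_lt (q : ConvexPath n d) {m : ℕ} (h : m < q.t) : q.X m < q.X (m + 1) := by
  have := q.mono m h
  simp only [X]
  exact_mod_cast this

lemma X_sub_pos (q : ConvexPath n d) {m : ℕ} (h : m < q.t) :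
    0 < q.X (m + 1) - q.X m := by linarith [q.X_lt h]

lemma slope_mul (q : ConvexPath n d) {m : ℕ} (h : m < q.t) :
    q.slope m * (q.X (m + 1) - q.X m) = q.Y (m + 1) - q.Y m :=
  div_mul_cancel₀ _ (ne_of_gt (q.X_sub_pos h))

lemma slope_lt (q : ConvexPath n d) {m : ℕ} (h : m + 2 ≤ q.t) :
    q.slope m < q.slope (m + 1) := by
  have hc := q.convex m h
  have h1 : m < q.t := by omega
  have h2 : m + 1 < q.t := by omega
  rw [slope, slope, div_lt_div_iff₀ (q.X_sub_pos h1) (q.X_sub_pos h2)]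
  have : ((q.P (m + 1)).2 - (q.P m).2 : ℝ) * ((q.P (m + 2)).1 - (q.P (m + 1)).1) <
      ((q.P (m + 2)).2 - (q.P (m + 1)).2) * ((q.P (m + 1)).1 - (q.P m).1) := by
    exact_mod_cast hc
  simpa [X, Y] using this

lemma slope_mono (q : ConvexPath n d) {i j : ℕ} (hij : i ≤ j) (hj : j + 1 ≤ q.t) :
    q.slope i ≤ q.slope j := by
  induction j, hij using Nat.le_induction with
  | base => exact le_refl _
  | succ j hij ih =>
    exact (ih (by omega)).trans (q.slope_lt (by omega)).le

/-- Every vertex lies above every (extended) segment line. -/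
lemma above (q : ConvexPath n d) {m : ℕ} (hm : m < q.t) :
    ∀ k, k ≤ q.t → q.line m (q.X k) ≤ q.Y k := by
  have up : ∀ k, m ≤ k → k ≤ q.t → q.line m (q.X k) ≤ q.Y k := by
    intro k hmk
    induction k, hmk using Nat.le_induction with
    | base => intro _; simp [line]
    | succ k hmk ih =>
      intro hk1
      have hkt : k < q.t := by omega
      have ihk := ih (by omega)
      have hs : q.slope m ≤ q.slope k := q.slope_mono hmk (by omega)
      have h1 : q.Y (k + 1) = q.Y k + q.slope k * (q.X (k + 1) - q.X k) := by
        rw [q.slope_mul hkt]; ring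
      have h2 : q.line m (q.X (k + 1)) =
          q.line m (q.X k) + q.slope m * (q.X (k + 1) - q.X k) := by
        simp only [line]; ring
      have hΔ : 0 ≤ q.X (k + 1) - q.X k := (q.X_sub_pos hkt).le
      have := mul_le_mul_of_nonneg_right hs hΔ
      rw [h1, h2]
      linarith
  intro k hk
  rcases le_or_gt m k with h | h
  · exact up k h hk
  · -- k < m : downward induction
    have down : ∀ k', k' ≤ m → q.line m (q.X k') ≤ q.Y k' := by
      intro k' hk'
      refine Nat.decreasingInduction' (fun k'' hlt hge ih => ?_) hk' (by simp [line])
      have hk''t : k'' < q.t := by omega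
      have hs : q.slope k'' ≤ q.slope m := q.slope_mono (le_of_lt hlt) (by omega)
      have h1 : q.Y k'' = q.Y (k'' + 1) - q.slope k'' * (q.X (k'' + 1) - q.X k'') := by
        rw [q.slope_mul hk''t]; ring
      have h2 : q.line m (q.X k'') =
          q.line m (q.X (k'' + 1)) - q.slope m * (q.X (k'' + 1) - q.X k'') := by
        simp only [line]; ring
      have hΔ : 0 ≤ q.X (k'' + 1) - q.X k'' := (q.X_sub_pos hk''t).le
      have := mul_le_mul_of_nonneg_right hs hΔ
      rw [h1, h2]
      linarith
    exact down k h.le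

/-- Affine interpolation bound. -/
lemma affine_between {A s u v x a b : ℝ} (hu : u ≤ x) (hx : x ≤ v) (huv : u < v)
    (ha : A + u * s ≤ a) (hb : A + v * s ≤ b) :
    A + x * s ≤ ((v - x) * a + (x - u) * b) / (v - u) := by
  rw [le_div_iff₀ (by linarith)]
  nlinarith [mul_le_mul_of_nonneg_left ha (by linarith : (0:ℝ) ≤ v - x),
             mul_le_mul_of_nonneg_left hb (by linarith : (0:ℝ) ≤ x - u)]

lemma line_affine (q : ConvexPath n d) (m : ℕ) (x : ℝ) :
    q.line m x = (q.Y m - q.X m * q.slope m) + x * q.slope m := by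
  simp only [line]; ring

/-- Second coordinates of vertices are at most `|d|`. -/
lemma P2_le (q : ConvexPath n d) (hn : 1 ≤ n) (m : ℕ) : (q.P m).2 ≤ |d| := by
  have key : ∀ m ≤ q.t, (q.P m).2 ≤ |d| := by
    intro m hm
    rcases eq_or_lt_of_le hm with h | h
    · subst h
      rw [q.last]
      exact le_abs_self d
    · -- m < q.t
      have h0 : q.line m (q.X 0) ≤ q.Y 0 := q.above h 0 (Nat.zero_le _)
      have hN : q.line m (q.X q.t) ≤ q.Y q.t := q.above h q.t le_rfl
      rw [q.X0, q.Y0] at h0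
      rw [q.Xt, q.Yt] at hN
      rw [q.line_affine] at h0 hN
      set s := q.slope m
      set A := q.Y m - q.X m * s with hA
      have hself : q.Y m = A + q.X m * s := by rw [hA]; ring
      have hx0 : 0 ≤ q.X m := by
        have := q.P1_nonneg m
        simp only [X]; exact_mod_cast this
      have hxn : q.X m ≤ n := by
        have := q.P1_le m
        simp only [X]; exact_mod_cast this
      have habs : (0:ℝ) ≤ |(d:ℝ)| := abs_nonneg _
      have hdd : (d:ℝ) ≤ |(d:ℝ)| := le_abs_self _
      have hyle : q.Y m ≤ |(d:ℝ)| := by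
        rw [hself]
        rcases le_or_gt 0 s with hs | hs
        · nlinarith [mul_le_mul_of_nonneg_left hxn hs]
        · nlinarith [mul_nonneg hx0 (neg_nonneg.2 hs.le)]
      have : ((q.P m).2 : ℝ) ≤ ((|d| : ℤ) : ℝ) := by
        rw [Int.cast_abs]
        exact hyle
      exact_mod_cast this
  rcases le_or_gt m q.t with h | h
  · exact key m h
  · rw [q.tail m h.le]
    exact key q.t le_rfl

end ConvexPath

open ConvexPath

/-- Key pointwise estimate: if `q` has some very low vertex, then every segment line of
`q` passes below every vertex of `p`. -/
lemma key_lemma {n : ℕ} {d : ℤ} (hn : 1 ≤ n) (p q : ConvexPath n d) (B : ℝ)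
    (hB0 : 0 ≤ B) (hBd : |(d:ℝ)| ≤ B) (hBv : ∀ j, j ≤ p.t → |p.Y j| ≤ B)
    {m : ℕ} (hm : m < q.t) {m0 : ℕ} (hm0t : m0 ≤ q.t)
    (hlow : q.Y m0 < -(2 * n * B))
    {j : ℕ} (hj : j ≤ p.t) : q.line m (p.X j) ≤ p.Y j := by
  have hn' : (1:ℝ) ≤ n := by exact_mod_cast hn
  set s := q.slope m with hsdef
  set A := q.Y m - q.X m * s with hAdef
  have hline : ∀ x : ℝ, q.line m x = A + x * s := fun x => by
    rw [q.line_affine, ← hsdef, ← hAdef]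
  have h0 : A + 0 * s ≤ 0 := by
    have := q.above hm 0 (Nat.zero_le _)
    rw [q.X0, q.Y0, hline] at this
    linarith [this]
  have hNd : A + (n:ℝ) * s ≤ d := by
    have := q.above hm q.t le_rfl
    rw [q.Xt, q.Yt, hline] at this
    exact this
  set a := q.X m0 with hadef
  have hA : A + a * s < -(2 * n * B) := by
    have := q.above hm m0 hm0t
    rw [hline] at this
    linarith
  have ha0 : 0 ≤ a := by
    have := q.P1_nonneg m0
    rw [hadef]; simp only [X]; exact_mod_cast this
  have han : a ≤ n := by
    have := q.P1_le m0
    rw [hadef]; simp only [X]; exact_mod_cast this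
  rcases Nat.eq_zero_or_pos j with hj0 | hjpos
  · subst hj0
    rw [p.X0, p.Y0, hline]
    linarith [h0]
  rcases eq_or_lt_of_le hj with hjt | hjlt
  · subst hjt
    rw [p.Xt, p.Yt, hline]
    exact hNd
  -- now 0 < j < p.t
  have hb1 : (1:ℝ) ≤ p.X j := by
    have h := p.P1_lt hjpos hj
    rw [p.first] at h
    have h2 : (1:ℤ) ≤ (p.P j).1 := h
    simp only [X]; exact_mod_cast h2
  have hbn : p.X j ≤ (n:ℝ) - 1 := by
    have h := p.P1_lt hjlt le_rfl
    rw [p.last] at h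
    have : (p.P j).1 ≤ (n:ℤ) - 1 := by omega
    have h2 : ((p.P j).1 : ℝ) ≤ ((n:ℤ) - 1 : ℤ) := by exact_mod_cast this
    push_cast at h2
    exact h2
  set b := p.X j with hbdef
  set y := p.Y j with hydef
  have hy : |y| ≤ B := hBv j hj
  have hyl : -B ≤ y := (abs_le.1 hy).1
  rw [hline]
  rcases le_or_gt b a with hba | hab
  · -- b ≤ a
    have h0a : (0:ℝ) < a := by linarith
    have hcomb := affine_between (A := A) (s := s) (u := 0) (v := a) (x := b)
      (by linarith) hba h0a h0 hA.le
    have hfin : ((a - b) * 0 + (b - 0) * -(2 * ↑n * B)) / (a - 0) ≤ y := by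
      rw [div_le_iff₀ (by linarith)]
      nlinarith [mul_le_mul_of_nonneg_right hyl ha0, mul_nonneg hB0 (by linarith : (0:ℝ) ≤ n - a),
        mul_nonneg (mul_nonneg (by norm_num : (0:ℝ) ≤ 2) (by linarith : (0:ℝ) ≤ n)) (mul_nonneg hB0 (by linarith : (0:ℝ) ≤ b - 1))]
    calc A + b * s ≤ _ := hcomb
      _ ≤ y := hfin
  · -- a < b
    have hna : (0:ℝ) < n - a := by linarith
    have hcomb := affine_between (A := A) (s := s) (u := a) (v := n) (x := b)
      hab.le (by linarith) (by linarith) hA.le hNd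
    have hfin : (((n:ℝ) - b) * -(2 * ↑n * B) + (b - a) * d) / ((n:ℝ) - a) ≤ y := by
      rw [div_le_iff₀ hna]
      have hdB : (d:ℝ) ≤ B := le_trans (le_abs_self _) hBd
      nlinarith [mul_le_mul_of_nonneg_right hyl (by linarith : (0:ℝ) ≤ n - a),
        mul_le_mul_of_nonneg_left hdB (by linarith : (0:ℝ) ≤ b - a),
        mul_nonneg (mul_nonneg (by norm_num : (0:ℝ) ≤ 2) (by linarith : (0:ℝ) ≤ n)) (mul_nonneg hB0 (by linarith : (0:ℝ) ≤ n - b - 1)),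
        mul_nonneg hB0 (by linarith : (0:ℝ) ≤ b - a)]
    calc A + b * s ≤ _ := hcomb
      _ ≤ y := hfin

/-- If `q` has a very low vertex, then `q` lies below `p`. -/
lemma below_of_low {n : ℕ} {d : ℤ} (hn : 1 ≤ n) (p q : ConvexPath n d) (B : ℤ)
    (hB0 : 0 ≤ B) (hBd : |d| ≤ B) (hBv : ∀ j, j ≤ p.t → |(p.P j).2| ≤ B)
    {m0 : ℕ} (hlow : (q.P m0).2 < -(2 * n * B)) : q.LiesBelow p := by
  classical
  -- normalize m0
  set m1 := min m0 q.t with hm1def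
  have hm1t : m1 ≤ q.t := min_le_right _ _
  have hPm1 : q.P m1 = q.P m0 := by
    rcases le_or_gt m0 q.t with h | h
    · rw [hm1def, min_eq_left h]
    · rw [hm1def, min_eq_right h.le, q.tail m0 h.le]
  have hlow1 : q.Y m1 < -(2 * n * (B:ℝ)) := by
    have : ((q.P m1).2 : ℝ) < ((-(2 * n * B) : ℤ) : ℝ) := by
      exact_mod_cast (hPm1 ▸ hlow : (q.P m1).2 < -(2 * (n:ℤ) * B))
    push_cast at this
    convert this using 2
    rfl
  have hBd' : |(d:ℝ)| ≤ (B:ℝ) := by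
    rw [← Int.cast_abs]; exact_mod_cast hBd
  have hB0' : (0:ℝ) ≤ B := by exact_mod_cast hB0
  have hBv' : ∀ j, j ≤ p.t → |p.Y j| ≤ (B:ℝ) := by
    intro j hj
    have := hBv j hj
    rw [Y, ← Int.cast_abs]
    exact_mod_cast this
  intro x hx
  obtain ⟨hx0, hxn⟩ := hx
  rw [graph_eq, graph_eq]
  have hqt : 0 < q.t := q.t_pos hn
  have hpt : 0 < p.t := p.t_pos hn
  have : Nonempty (Fin q.t) := ⟨⟨0, hqt⟩⟩
  apply ciSup_le
  rintro ⟨m, hm⟩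
  -- find the p-segment containing x
  set Pr : ℕ → Prop := fun k => p.X k ≤ x with hPr
  have h0P : Pr 0 := by rw [hPr]; simp only; rw [p.X0]; exact hx0
  set j := Nat.findGreatest Pr (p.t - 1) with hjdef
  have hjle : j ≤ p.t - 1 := Nat.findGreatest_le _
  have hjlt : j < p.t := by omega
  have hjx : p.X j ≤ x := Nat.findGreatest_spec (Nat.zero_le _) h0P
  have hxj1 : x ≤ p.X (j + 1) := by
    rcases lt_or_ge j (p.t - 1) with h | h
    · have hnot : ¬ Pr (j + 1) :=
        Nat.findGreatest_is_greatest (n := p.t - 1) (P := Pr) (by omega) (by omega)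
      have hx' : ¬ (p.X (j + 1) ≤ x) := by simpa [hPr] using hnot
      exact (not_le.mp hx').le
    · have hj' : j = p.t - 1 := by omega
      have : j + 1 = p.t := by omega
      rw [this, p.Xt]
      exact hxn
  have key0 : q.line m (p.X j) ≤ p.Y j :=
    key_lemma hn p q (B:ℝ) hB0' hBd' hBv' hm hm1t hlow1 hjlt.le
  have key1 : q.line m (p.X (j + 1)) ≤ p.Y (j + 1) :=
    key_lemma hn p q (B:ℝ) hB0' hBd' hBv' hm hm1t hlow1 (by omega)
  have hXlt : p.X j < p.X (j + 1) := p.X_lt hjlt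
  set s := q.slope m with hsdef
  set A := q.Y m - q.X m * s with hAdef
  have hline : ∀ z : ℝ, q.line m z = A + z * s := fun z => by
    rw [q.line_affine, ← hsdef, ← hAdef]
  rw [hline] at key0 key1
  have hcomb := affine_between (A := A) (s := s) (u := p.X j) (v := p.X (j + 1)) (x := x)
    hjx hxj1 hXlt key0 key1
  have h2 : ((p.X (j + 1) - x) * p.Y j + (x - p.X j) * p.Y (j + 1)) / (p.X (j + 1) - p.X j)
      = p.line j x := by
    have hne : p.X (j + 1) - p.X j ≠ 0 := ne_of_gt (by linarith)
    rw [ConvexPath.line, ConvexPath.slope]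
    field_simp
    ring
  have h3 : p.line j x ≤ ⨆ m : Fin p.t, p.line m.1 x := by
    apply le_ciSup (f := fun m : Fin p.t => p.line m.1 x)
      (Set.Finite.bddAbove (Set.finite_range _)) ⟨j, hjlt⟩
  rw [hline]
  rw [h2] at hcomb
  calc A + x * s ≤ p.line j x := hcomb
    _ ≤ _ := h3

/-- Extensionality for convex paths. -/
lemma ConvexPath.ext' {n : ℕ} {d : ℤ} {q q' : ConvexPath n d}
    (h1 : q.t = q'.t) (h2 : q.P = q'.P) : q = q' := by
  cases q; cases q'
  simp only [ConvexPath.mk.injEq]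
  exact ⟨h1, h2⟩

/-- all but finitely many convex lattice paths of size `(n,d)` lie below
any given convex lattice path `p` of size `(n,d)`. -/
theorem stmt7 (n : ℕ) (hn : 1 ≤ n) (d : ℤ) (p : ConvexPath n d) :
    {q : ConvexPath n d | ¬ q.LiesBelow p}.Finite := by
  classical
  set B : ℤ := (((Finset.range (p.t + 1)).sup fun j => (p.P j).2.natAbs : ℕ) : ℤ) with hBdef
  have hB0 : (0:ℤ) ≤ B := Int.ofNat_nonneg _
  have hBv : ∀ j, j ≤ p.t → |(p.P j).2| ≤ B := by
    intro j hj
    have h := Finset.le_sup (f := fun j => (p.P j).2.natAbs)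
      (Finset.mem_range.2 (by omega : j < p.t + 1))
    rw [hBdef, Int.abs_eq_natAbs]
    exact_mod_cast h
  have hBd : |d| ≤ B := by
    have := hBv p.t le_rfl
    rw [p.last] at this
    exact this
  set box : Set (ℤ × ℤ) := Set.Icc 0 (n:ℤ) ×ˢ Set.Icc (-(2 * n * B)) |d| with hboxdef
  have hboxfin : box.Finite := (Set.finite_Icc _ _).prod (Set.finite_Icc _ _)
  set S : Set (ConvexPath n d) := {q | ∀ m, q.P m ∈ box} with hSdef
  have hSfin : S.Finite := by
    rw [← Set.finite_coe_iff]
    have : Finite ↥box := hboxfin.to_subtype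
    let g : ↥S → Fin (n + 1) × (Fin (n + 1) → ↥box) := fun q =>
      (⟨q.1.t, by have := q.1.t_le; omega⟩, fun i => ⟨q.1.P i.1, q.2 i.1⟩)
    have hg : Function.Injective g := by
      rintro ⟨q, hq⟩ ⟨q', hq'⟩ h
      simp only [g, Prod.mk.injEq] at h
      obtain ⟨ht, hP⟩ := h
      have ht' : q.t = q'.t := by
        have := congrArg Fin.val ht
        exact this
      have hP' : q.P = q'.P := by
        funext m
        rcases le_or_gt m n with hmn | hmn
        · have := congrFun hP ⟨m, by omega⟩
          exact congrArg Subtype.val this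
        · have hq1 : q.P m = ((n:ℤ), d) := by
            rw [q.tail m (by have := q.t_le; omega), q.last]
          have hq2 : q'.P m = ((n:ℤ), d) := by
            rw [q'.tail m (by have := q'.t_le; omega), q'.last]
          rw [hq1, hq2]
      exact Subtype.ext (ConvexPath.ext' ht' hP')
    exact Finite.of_injective g hg
  apply hSfin.subset
  intro q hq
  rw [Set.mem_setOf_eq] at hq
  rw [hSdef, Set.mem_setOf_eq]
  intro m
  rw [hboxdef, Set.mem_prod]
  refine ⟨⟨q.P1_nonneg m, q.P1_le m⟩, ?_, q.P2_le hn m⟩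
  by_contra h
  push_neg at h
  exact hq (below_of_low hn p q B hB0 hBd hBv h)

end ADEShuffle
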